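/- If a labeled graph contains a 3-color node i joined by an edge to a node j whose incident edges carry at least 2 distinct labels (j is M-color with M ≥ 2), then every storage code over the graph satisfies |S|⁴ ≤ |T|⁵; i.e., the symbol rate is at most 5/4, hence strictly below 4/3 whenever |S| ≥ 2. -/

import Mathlib

/-- A storage code problem over a labeled graph: `N` nodes, `K` sources, and a
symmetric labeling `t` of pairs of nodes by sources, with no self-loops. -/
structure LabeledGraph (N K : ℕ) where
  t : Fin N → Fin N → Option (Fin K)
  symm : ∀ i j, t i j = t j i
  irrefl : ∀ i, t i i = none

/-- `V` is a storage code over `G`: from the coded symbols at the two endpoints of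
any `W_k`-edge, the source symbol `W_k` can be decoded. -/
def IsStorageCode {N K : ℕ} (G : LabeledGraph N K) (S T : Type)
    (V : Fin N → (Fin K → S) → T) : Prop :=
  ∀ i j k, G.t i j = some k →
    ∃ D : T → T → S, ∀ w : Fin K → S, D (V i w) (V j w) = w k

/-- The set of source labels carried by the edges incident to node `i`. -/
def colorSet {N K : ℕ} (G : LabeledGraph N K) (i : Fin N) : Set (Fin K) :=
  {k | ∃ j, G.t i j = some k}

/-- Node `i` is `M`-color: its incident edges carry exactly `M` distinct labels. -/
def IsMColor {N K : ℕ} (G : LabeledGraph N K) (i : Fin N) (M : ℕ) : Prop :=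
  (colorSet G i).ncard = M


open Finset

/-- Four distinct recoverable coordinates from five coded symbols. -/
lemma storage_four_distinct {K : ℕ} {S T : Type} [Fintype S] [Fintype T]
    (a b c d : Fin K) (hab : a ≠ b) (hac : a ≠ c) (had : a ≠ d)
    (hbc : b ≠ c) (hbd : b ≠ d) (hcd : c ≠ d)
    (V1 V2 V3 V4 V5 : (Fin K → S) → T)
    (Da : T → T → S) (hDa : ∀ w, Da (V1 w) (V2 w) = w a)
    (Db : T → T → S) (hDb : ∀ w, Db (V1 w) (V4 w) = w b)
    (Dc : T → T → S) (hDc : ∀ w, Dc (V1 w) (V5 w) = w c)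
    (Dd : T → T → S) (hDd : ∀ w, Dd (V2 w) (V3 w) = w d) :
    Fintype.card S ^ 4 ≤ Fintype.card T ^ 5 := by
  classical
  rcases isEmpty_or_nonempty S with hS | hS
  · simp [Fintype.card_eq_zero]
  obtain ⟨s0⟩ := hS
  let w0 : Fin K → S := fun _ => s0
  let wof : S × S × S × S → (Fin K → S) := fun p =>
    Function.update (Function.update (Function.update (Function.update w0 a p.1) b p.2.1)
      c p.2.2.1) d p.2.2.2
  have hwa : ∀ p, wof p a = p.1 := fun p => by
    simp [wof, Function.update_of_ne had, Function.update_of_ne hac,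
      Function.update_of_ne hab]
  have hwb : ∀ p, wof p b = p.2.1 := fun p => by
    simp [wof, Function.update_of_ne hbd, Function.update_of_ne hbc]
  have hwc : ∀ p, wof p c = p.2.2.1 := fun p => by
    simp [wof, Function.update_of_ne hcd]
  have hwd : ∀ p, wof p d = p.2.2.2 := fun p => by simp [wof]
  let F : S × S × S × S → T × T × T × T × T := fun p =>
    (V1 (wof p), V2 (wof p), V3 (wof p), V4 (wof p), V5 (wof p))
  have hinj : Function.Injective F := by
    intro p q h
    simp only [F, Prod.mk.injEq] at h
    obtain ⟨h1, h2, h3, h4, h5⟩ := h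
    have e1 : p.1 = q.1 := by
      rw [← hwa p, ← hwa q, ← hDa (wof p), ← hDa (wof q), h1, h2]
    have e2 : p.2.1 = q.2.1 := by
      rw [← hwb p, ← hwb q, ← hDb (wof p), ← hDb (wof q), h1, h4]
    have e3 : p.2.2.1 = q.2.2.1 := by
      rw [← hwc p, ← hwc q, ← hDc (wof p), ← hDc (wof q), h1, h5]
    have e4 : p.2.2.2 = q.2.2.2 := by
      rw [← hwd p, ← hwd q, ← hDd (wof p), ← hDd (wof q), h2, h3]
    exact Prod.ext e1 (Prod.ext e2 (Prod.ext e3 e4))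
  have hcard := Fintype.card_le_of_injective F hinj
  calc Fintype.card S ^ 4 = Fintype.card (S × S × S × S) := by
        simp [Fintype.card_prod]; ring
    _ ≤ Fintype.card (T × T × T × T × T) := hcard
    _ = Fintype.card T ^ 5 := by simp [Fintype.card_prod]; ring



open Finset

/-- Three distinct coordinates, with the middle one recoverable twice
(from `(V1,V4)` and from `(V2,V3)`), force `|S|^4 ≤ |T|^5`. -/
lemma storage_doubled {K : ℕ} {S T : Type} [Fintype S] [Fintype T]
    (a b c : Fin K) (hab : a ≠ b) (hac : a ≠ c) (hbc : b ≠ c)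
    (V1 V2 V3 V4 V5 : (Fin K → S) → T)
    (Da : T → T → S) (hDa : ∀ w, Da (V1 w) (V2 w) = w a)
    (Db1 : T → T → S) (hDb1 : ∀ w, Db1 (V1 w) (V4 w) = w b)
    (Db2 : T → T → S) (hDb2 : ∀ w, Db2 (V2 w) (V3 w) = w b)
    (Dc : T → T → S) (hDc : ∀ w, Dc (V1 w) (V5 w) = w c) :
    Fintype.card S ^ 4 ≤ Fintype.card T ^ 5 := by
  classical
  rcases isEmpty_or_nonempty S with hS | hS
  · simp [Fintype.card_eq_zero]
  obtain ⟨s0⟩ := hS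
  let w0 : Fin K → S := fun _ => s0
  have hT : 0 < Fintype.card T := Fintype.card_pos_iff.mpr ⟨V1 w0⟩
  -- the two "fan" finsets for the doubled coordinate b
  let F1 : S → Finset T := fun s => univ.filter (fun t => ∃ t', Db1 t t' = s)
  let F2 : S → Finset T := fun s => univ.filter (fun t => ∃ t', Db2 t t' = s)
  -- Step A : |S|² ≤ |F1 s| * |F2 s| * |T|
  have stepA : ∀ s : S,
      Fintype.card S ^ 2 ≤ (F1 s).card * ((F2 s).card * Fintype.card T) := by
    intro s
    let wof : S × S → (Fin K → S) := fun p =>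
      Function.update (Function.update (Function.update w0 a p.1) b s) c p.2
    have hwa : ∀ p, wof p a = p.1 := fun p => by
      simp [wof, Function.update_of_ne hac, Function.update_of_ne hab]
    have hwb : ∀ p, wof p b = s := fun p => by
      simp [wof, Function.update_of_ne hbc]
    have hwc : ∀ p, wof p c = p.2 := fun p => by simp [wof]
    have key : (univ : Finset (S × S)).card ≤
        ((F1 s) ×ˢ ((F2 s) ×ˢ (univ : Finset T))).card := by
      apply Finset.card_le_card_of_injOn
        (fun p => (V1 (wof p), V2 (wof p), V5 (wof p)))
      · intro p _
        simp only [Finset.mem_coe, Finset.mem_product, Finset.mem_filter, Finset.mem_univ, true_and, F1, F2]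
        refine ⟨⟨V4 (wof p), ?_⟩, ⟨V3 (wof p), ?_⟩, trivial⟩
        · rw [hDb1]; exact hwb p
        · rw [hDb2]; exact hwb p
      · intro p _ q _ h
        simp only [Prod.mk.injEq] at h
        obtain ⟨h1, h2, h5⟩ := h
        have e1 : p.1 = q.1 := by
          rw [← hwa p, ← hwa q, ← hDa (wof p), ← hDa (wof q), h1, h2]
        have e2 : p.2 = q.2 := by
          rw [← hwc p, ← hwc q, ← hDc (wof p), ← hDc (wof q), h1, h5]
        exact Prod.ext e1 e2
    calc Fintype.card S ^ 2 = (univ : Finset (S × S)).card := by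
          simp [Fintype.card_prod]; ring
      _ ≤ ((F1 s) ×ˢ ((F2 s) ×ˢ (univ : Finset T))).card := key
      _ = (F1 s).card * ((F2 s).card * Fintype.card T) := by
          simp [Finset.card_product]
  -- Step B : the fans have bounded total size
  have stepB : ∀ (D : T → T → S),
      (∑ s : S, (univ.filter (fun t => ∃ t', D t t' = s)).card) ≤ Fintype.card T ^ 2 := by
    intro D
    calc (∑ s : S, (univ.filter (fun t => ∃ t', D t t' = s)).card)
        = ∑ s : S, ∑ t : T, (if ∃ t', D t t' = s then 1 else 0) := by
          simp only [Finset.card_filter]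
      _ = ∑ t : T, ∑ s : S, (if ∃ t', D t t' = s then 1 else 0) := Finset.sum_comm
      _ = ∑ t : T, (univ.filter (fun s => ∃ t', D t t' = s)).card := by
          simp only [Finset.card_filter]
      _ ≤ ∑ _t : T, Fintype.card T := by
          apply Finset.sum_le_sum
          intro t _
          have himg : univ.filter (fun s => ∃ t', D t t' = s) = univ.image (D t) := by
            ext s; simp [eq_comm]
          rw [himg]
          exact le_trans (Finset.card_image_le) (by simp)
      _ = Fintype.card T ^ 2 := by simp [sq]
  have hB1 : (∑ s : S, (F1 s).card) ≤ Fintype.card T ^ 2 := stepB Db1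
  have hB2 : (∑ s : S, (F2 s).card) ≤ Fintype.card T ^ 2 := stepB Db2
  -- Step C : real arithmetic with Cauchy–Schwarz
  have hτ0 : (0:ℝ) < (Fintype.card T : ℝ) := by exact_mod_cast hT
  have hfg : ∀ s : S, (Fintype.card S : ℝ) ^ 2 / (Fintype.card T : ℝ) ≤
      ((F1 s).card : ℝ) * ((F2 s).card : ℝ) := by
    intro s
    rw [div_le_iff₀ hτ0]
    have h' : (Fintype.card S : ℝ) ^ 2 ≤
        ((F1 s).card : ℝ) * (((F2 s).card : ℝ) * (Fintype.card T : ℝ)) := by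
      exact_mod_cast stepA s
    calc (Fintype.card S : ℝ) ^ 2 ≤ ((F1 s).card : ℝ) * (((F2 s).card : ℝ) *
          (Fintype.card T : ℝ)) := h'
      _ = ((F1 s).card : ℝ) * ((F2 s).card : ℝ) * (Fintype.card T : ℝ) := by ring
  have hCS : (∑ s : S, Real.sqrt (((F1 s).card : ℝ) * ((F2 s).card : ℝ))) ^ 2 ≤
      (∑ s : S, ((F1 s).card : ℝ)) * (∑ s : S, ((F2 s).card : ℝ)) :=
    Finset.sum_sq_le_sum_mul_sum_of_sq_eq_mul univ (fun s _ => Nat.cast_nonneg _)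
      (fun s _ => Nat.cast_nonneg _)
      (fun s _ => Real.sq_sqrt (mul_nonneg (Nat.cast_nonneg _) (Nat.cast_nonneg _)))
  have hsum_f : (∑ s : S, ((F1 s).card : ℝ)) ≤ (Fintype.card T : ℝ) ^ 2 := by
    exact_mod_cast hB1
  have hsum_g : (∑ s : S, ((F2 s).card : ℝ)) ≤ (Fintype.card T : ℝ) ^ 2 := by
    exact_mod_cast hB2
  have hr_lb : ∀ s ∈ (univ : Finset S),
      Real.sqrt ((Fintype.card S : ℝ) ^ 2 / (Fintype.card T : ℝ)) ≤
      Real.sqrt (((F1 s).card : ℝ) * ((F2 s).card : ℝ)) := fun s _ =>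
    Real.sqrt_le_sqrt (hfg s)
  have h1 : (Fintype.card S : ℝ) *
      Real.sqrt ((Fintype.card S : ℝ) ^ 2 / (Fintype.card T : ℝ)) ≤
      ∑ s : S, Real.sqrt (((F1 s).card : ℝ) * ((F2 s).card : ℝ)) := by
    have := Finset.card_nsmul_le_sum univ
      (fun s => Real.sqrt (((F1 s).card : ℝ) * ((F2 s).card : ℝ)))
      (Real.sqrt ((Fintype.card S : ℝ) ^ 2 / (Fintype.card T : ℝ))) hr_lb
    simpa [nsmul_eq_mul, Finset.card_univ] using this
  have h0 : (0:ℝ) ≤ (Fintype.card S : ℝ) *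
      Real.sqrt ((Fintype.card S : ℝ) ^ 2 / (Fintype.card T : ℝ)) := by positivity
  have h1' : ((Fintype.card S : ℝ) *
      Real.sqrt ((Fintype.card S : ℝ) ^ 2 / (Fintype.card T : ℝ))) ^ 2 ≤
      (∑ s : S, Real.sqrt (((F1 s).card : ℝ) * ((F2 s).card : ℝ))) ^ 2 :=
    pow_le_pow_left₀ h0 h1 2
  have hg0 : (0:ℝ) ≤ ∑ s : S, ((F2 s).card : ℝ) :=
    Finset.sum_nonneg fun s _ => Nat.cast_nonneg _
  have hprod : (∑ s : S, ((F1 s).card : ℝ)) * (∑ s : S, ((F2 s).card : ℝ)) ≤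
      (Fintype.card T : ℝ) ^ 2 * (Fintype.card T : ℝ) ^ 2 :=
    mul_le_mul hsum_f hsum_g hg0 (sq_nonneg _)
  have h2 : ((Fintype.card S : ℝ) *
      Real.sqrt ((Fintype.card S : ℝ) ^ 2 / (Fintype.card T : ℝ))) ^ 2 ≤
      (Fintype.card T : ℝ) ^ 2 * (Fintype.card T : ℝ) ^ 2 := h1'.trans (hCS.trans hprod)
  have h3 : (Fintype.card S : ℝ) ^ 2 *
      ((Fintype.card S : ℝ) ^ 2 / (Fintype.card T : ℝ)) ≤
      (Fintype.card T : ℝ) ^ 2 * (Fintype.card T : ℝ) ^ 2 := by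
    rw [mul_pow, Real.sq_sqrt (by positivity)] at h2
    exact h2
  have h4 : (Fintype.card S : ℝ) ^ 4 ≤ (Fintype.card T : ℝ) ^ 5 := by
    have h5 : (Fintype.card S : ℝ) ^ 4 / (Fintype.card T : ℝ) ≤
        (Fintype.card T : ℝ) ^ 4 := by
      calc (Fintype.card S : ℝ) ^ 4 / (Fintype.card T : ℝ)
          = (Fintype.card S : ℝ) ^ 2 *
            ((Fintype.card S : ℝ) ^ 2 / (Fintype.card T : ℝ)) := by ring
        _ ≤ (Fintype.card T : ℝ) ^ 2 * (Fintype.card T : ℝ) ^ 2 := h3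
        _ = (Fintype.card T : ℝ) ^ 4 := by ring
    rw [div_le_iff₀ hτ0] at h5
    calc (Fintype.card S : ℝ) ^ 4 ≤ (Fintype.card T : ℝ) ^ 4 * (Fintype.card T : ℝ) := h5
      _ = (Fintype.card T : ℝ) ^ 5 := by ring
  exact_mod_cast h4

/-- a `3`-color node adjacent to a node carrying at least `2` distinct
labels forces `|S|⁴ ≤ |T|⁵`, i.e. symbol rate at most `5/4`. -/
theorem rate_le_of_three_color_adjacent {N K : ℕ} (G : LabeledGraph N K) (S T : Type)
    [Fintype S] [Fintype T] (V : Fin N → (Fin K → S) → T)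
    (hV : IsStorageCode G S T V)
    (i j : Fin N) (hi : IsMColor G i 3) (hij : G.t i j ≠ none)
    (hj : 2 ≤ (colorSet G j).ncard) :
    Fintype.card S ^ 4 ≤ Fintype.card T ^ 5 := by
  classical
  obtain ⟨k, hk⟩ := Option.ne_none_iff_exists'.mp hij
  have hki : k ∈ colorSet G i := ⟨j, hk⟩
  have hfin : (colorSet G i).Finite := Set.toFinite _
  set F : Finset (Fin K) := hfin.toFinset with hF
  have hcard : F.card = 3 := by
    rw [hF, ← Set.ncard_eq_toFinset_card (colorSet G i) hfin]; exact hi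
  have hkF : k ∈ F := hfin.mem_toFinset.mpr hki
  have h2 : (F.erase k).card = 2 := by
    rw [Finset.card_erase_of_mem hkF, hcard]
  obtain ⟨b, c, hbc, hbcE⟩ := Finset.card_eq_two.mp h2
  have hbE : b ∈ F.erase k := by rw [hbcE]; simp
  have hcE : c ∈ F.erase k := by rw [hbcE]; simp
  have hkb : k ≠ b := fun h => (Finset.ne_of_mem_erase hbE) h.symm
  have hkc : k ≠ c := fun h => (Finset.ne_of_mem_erase hcE) h.symm
  have hbmem : b ∈ colorSet G i := hfin.mem_toFinset.mp (Finset.mem_of_mem_erase hbE)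
  have hcmem : c ∈ colorSet G i := hfin.mem_toFinset.mp (Finset.mem_of_mem_erase hcE)
  obtain ⟨jb, hjb⟩ := hbmem
  obtain ⟨jc, hjc⟩ := hcmem
  obtain ⟨k', hk'mem, hk'ne⟩ :=
    Set.exists_ne_of_one_lt_ncard (lt_of_lt_of_le one_lt_two hj) k
  obtain ⟨j', hj'⟩ := hk'mem
  obtain ⟨Da, hDa⟩ := hV i j k hk
  obtain ⟨Db, hDb⟩ := hV i jb b hjb
  obtain ⟨Dc, hDc⟩ := hV i jc c hjc
  obtain ⟨Dd, hDd⟩ := hV j j' k' hj'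
  by_cases hb' : k' = b
  · subst hb'
    exact storage_doubled k k' c hkb hkc hbc (V i) (V j) (V j') (V jb) (V jc)
      Da hDa Db hDb Dd hDd Dc hDc
  by_cases hc' : k' = c
  · subst hc'
    exact storage_doubled k k' b hkc hkb (Ne.symm hbc) (V i) (V j) (V j') (V jc) (V jb)
      Da hDa Dc hDc Dd hDd Db hDb
  · exact storage_four_distinct k b c k' hkb hkc (Ne.symm hk'ne) hbc
      (fun h => hb' h.symm) (fun h => hc' h.symm) (V i) (V j) (V j') (V jb) (V jc)
      Da hDa Db hDb Dc hDc Dd hDd
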